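/- Let ρ be any G-invariant state on B(L²(X)) (i.e., U_R(g) ρ U_R(g)* = ρ for all g). Then for every A ∈ B(H_S)^{G_x}, (Γ_ρ ∘ ¥_x)(A) = (1/|G|) ∑_{g∈G} U_S(g) A U_S(g)*, the G-twirl of A. In particular this holds for ρ = (1/n)I and for ρ = P_1, the projection onto the constant function. -/

import Mathlib

open scoped TensorProduct
noncomputable section

/-- `L²(X)`: the complex Hilbert space of functions `X → ℂ`. -/
abbrev L2 (X : Type*) [Fintype X] := EuclideanSpace ℂ X

/-- The permutation representation of `G` on `L²(X)`, `(g·f)(x) = f(g⁻¹·x)`, as a linear map. -/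
def UR_lin {G X : Type*} [Group G] [Fintype X] [MulAction G X] (g : G) :
    L2 X →ₗ[ℂ] L2 X where
  toFun f := WithLp.toLp 2 (fun y => f (g⁻¹ • y))
  map_add' f₁ f₂ := by ext y; simp
  map_smul' c f := by ext y; simp

/-- The permutation (unitary) representation of `G` on `L²(X)`. -/
def UR (G X : Type*) [Group G] [Fintype X] [MulAction G X] :
    G →* (L2 X →L[ℂ] L2 X) where
  toFun g := (UR_lin g).toContinuousLinearMap
  map_one' := by ext f y; simp [UR_lin]
  map_mul' g h := by ext f y; simp [UR_lin, mul_inv_rev, mul_smul]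

/-- The indicator function `δ_y ∈ L²(X)`. -/
def delta {X : Type*} [Fintype X] [DecidableEq X] (y : X) : L2 X :=
  EuclideanSpace.single y (1:ℂ)

/-- The rank-one projection onto the indicator function `δ_y`. -/
def Pproj {X : Type*} [Fintype X] [DecidableEq X] (y : X) : L2 X →L[ℂ] L2 X :=
  (innerSL ℂ (delta y)).smulRight (delta y)

/-- Invariance of an operator under a subgroup, `U_S(h) A U_S(h)⁻¹ = A` for all `h ∈ S`. -/
def InvUnder {G HS : Type*} [Group G] [NormedAddCommGroup HS] [InnerProductSpace ℂ HS]
    (US : G →* (HS →L[ℂ] HS)) (S : Subgroup G) (A : HS →L[ℂ] HS) : Prop :=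
  ∀ h ∈ S, US h * A * US h⁻¹ = A

/-- The relativisation map `¥ₓ`, with canonical coset representatives. -/
def yen {G X HS : Type*} [Group G] [Finite G] [Fintype X] [DecidableEq X] [MulAction G X]
    [NormedAddCommGroup HS] [InnerProductSpace ℂ HS]
    (US : G →* (HS →L[ℂ] HS)) (x : X) (A : HS →L[ℂ] HS) :
    (HS →L[ℂ] HS) ⊗[ℂ] (L2 X →L[ℂ] L2 X) :=
  letI : Fintype (G ⧸ MulAction.stabilizer G x) := Fintype.ofFinite _
  ∑ c : G ⧸ MulAction.stabilizer G x,
    (US c.out * A * US c.out⁻¹) ⊗ₜ[ℂ] Pproj (c.out • x)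

/-- The restriction map `Γ_ω`, determined by `A ⊗ B ↦ tr(ωB) A`. -/
def Gamma {X HS : Type*} [Fintype X] [NormedAddCommGroup HS] [InnerProductSpace ℂ HS]
    (ω : L2 X →L[ℂ] L2 X) :
    (HS →L[ℂ] HS) ⊗[ℂ] (L2 X →L[ℂ] L2 X) →ₗ[ℂ] (HS →L[ℂ] HS) :=
  TensorProduct.lift
    (LinearMap.mk₂ ℂ (fun A B => (LinearMap.trace ℂ (L2 X) ↑(ω * B)) • A)
      (fun A₁ A₂ B => by simp [smul_add])
      (fun c A B => by simp [smul_smul]; ring_nf)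
      (fun A B₁ B₂ => by simp [mul_add, add_smul])
      (fun c A B => by simp [mul_smul_comm, smul_smul]))

/-- The normalised constant function, unit vector spanning the trivial subrepresentation. -/
def unitConst (X : Type*) [Fintype X] : L2 X := WithLp.toLp 2 (fun (_ : X) => ((Real.sqrt (Fintype.card X) : ℂ))⁻¹)

set_option linter.unusedSectionVars false
section
variable {X : Type*} [Fintype X] [DecidableEq X]

lemma trace_apply (T : L2 X →L[ℂ] L2 X) :
    LinearMap.trace ℂ (L2 X) ↑T = ∑ z, T (delta z) z := by
  rw [LinearMap.trace_eq_matrix_trace ℂ (PiLp.basisFun 2 ℂ X)]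
  simp only [Matrix.trace, Matrix.diag, LinearMap.toMatrix_apply, PiLp.basisFun_repr,
    PiLp.basisFun_apply]
  rfl

lemma gamma_tmul {HS : Type*} [NormedAddCommGroup HS] [InnerProductSpace ℂ HS]
    (ω B : L2 X →L[ℂ] L2 X) (A : HS →L[ℂ] HS) :
    Gamma ω (A ⊗ₜ[ℂ] B) = (LinearMap.trace ℂ (L2 X) ↑(ω * B)) • A := by
  simp [Gamma]

lemma UR_delta {G : Type*} [Group G] [MulAction G X] (g : G) (y : X) :
    UR G X g (delta y) = delta (g • y) := by
  ext z
  simp only [UR, UR_lin, delta, MonoidHom.coe_mk, OneHom.coe_mk,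
    LinearMap.coe_toContinuousLinearMap', LinearMap.coe_mk, AddHom.coe_mk,
    EuclideanSpace.single_apply]
  simp only [inv_smul_eq_iff]

lemma trace_mul_Pproj (ρ : L2 X →L[ℂ] L2 X) (y : X) :
    LinearMap.trace ℂ (L2 X) ↑(ρ * Pproj y) = ρ (delta y) y := by
  rw [trace_apply]
  simp [Pproj, delta, EuclideanSpace.inner_single_right, EuclideanSpace.single_apply,
    apply_ite (fun c : ℂ => c • ρ (EuclideanSpace.single y 1)), eq_comm]
  rw [Finset.sum_eq_single y]
  · simp
  · intro b _ hb
    simp [Ne.symm hb]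
  · simp
end

lemma core {G X HS : Type*} [Group G] [Fintype G] [Fintype X] [DecidableEq X]
    [MulAction G X] [MulAction.IsPretransitive G X]
    [NormedAddCommGroup HS] [InnerProductSpace ℂ HS]
    (US : G →* (HS →L[ℂ] HS))
    (x : X) (A : HS →L[ℂ] HS) (hA : InvUnder US (MulAction.stabilizer G x) A)
    (ρ : L2 X →L[ℂ] L2 X)
    (hρ : ∀ y : X, ρ (delta y) y = ((Fintype.card X : ℂ))⁻¹) :
    Gamma ρ (yen US x A) = ((Nat.card G : ℂ))⁻¹ • ∑ g : G, US g * A * US g⁻¹ := by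
  classical
  set H := MulAction.stabilizer G x with hH
  letI : Fintype (G ⧸ H) := Fintype.ofFinite _
  -- compute LHS
  have hL : Gamma ρ (yen US x A)
      = ((Fintype.card X : ℂ))⁻¹ • ∑ c : G ⧸ H, US c.out * A * US c.out⁻¹ := by
    rw [yen, map_sum, Finset.smul_sum]
    apply Finset.sum_congr rfl
    intro c _
    rw [gamma_tmul, trace_mul_Pproj, hρ]
  rw [hL]
  -- the bijection (G ⧸ H) × H ≃ G
  have hbij : Function.Bijective (fun p : (G ⧸ H) × H => (p.1.out * (p.2 : G))) := by
    constructor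
    · rintro ⟨c, h⟩ ⟨c', h'⟩ hcc
      simp only at hcc
      have h1 : (QuotientGroup.mk (c.out * (h:G)) : G ⧸ H) = c := by
        rw [QuotientGroup.mk_mul_of_mem _ h.2, QuotientGroup.out_eq']
      have h2 : (QuotientGroup.mk (c'.out * (h':G)) : G ⧸ H) = c' := by
        rw [QuotientGroup.mk_mul_of_mem _ h'.2, QuotientGroup.out_eq']
      have hc : c = c' := by rw [← h1, ← h2, hcc]
      subst hc
      have : (h : G) = h' := by
        have := mul_left_cancel hcc
        exact_mod_cast this
      simp [Prod.ext_iff, Subtype.ext this]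
    · intro g
      refine ⟨⟨QuotientGroup.mk g, ⟨(QuotientGroup.mk g : G ⧸ H).out⁻¹ * g, ?_⟩⟩, ?_⟩
      · rw [← QuotientGroup.eq, QuotientGroup.out_eq']
      · simp
  -- fiber constancy
  have hfib : ∀ g : G, US g * A * US g⁻¹
      = US (QuotientGroup.mk g : G ⧸ H).out * A * US (QuotientGroup.mk g : G ⧸ H).out⁻¹ := by
    intro g
    set q := (QuotientGroup.mk g : G ⧸ H).out with hq
    have hmem : q⁻¹ * g ∈ H := by
      rw [← QuotientGroup.eq, hq, QuotientGroup.out_eq']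
    have hinv := hA _ hmem
    have hg : g = q * (q⁻¹ * g) := by group
    conv_lhs => rw [hg]
    conv_rhs => rw [← hinv]
    rw [mul_inv_rev, map_mul, map_mul]
    simp only [map_mul, mul_assoc]
  -- regroup the RHS sum
  have hsum : ∑ g : G, US g * A * US g⁻¹
      = (Fintype.card H : ℂ) • ∑ c : G ⧸ H, US c.out * A * US c.out⁻¹ := by
    have := Fintype.sum_bijective _ hbij
      (fun p : (G ⧸ H) × H => US p.1.out * A * US p.1.out⁻¹)
      (fun g : G => US g * A * US g⁻¹) ?_
    · rw [← this, Fintype.sum_prod_type, Finset.smul_sum]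
      simp only [Finset.sum_const, Finset.card_univ]
      simp [Nat.cast_smul_eq_nsmul]
    · rintro ⟨c, h⟩
      dsimp only
      rw [hfib (c.out * (h:G)), QuotientGroup.mk_mul_of_mem _ h.2, QuotientGroup.out_eq']
  -- cardinalities
  have hcardG : (Fintype.card G : ℂ) = (Fintype.card (G ⧸ H) : ℂ) * (Fintype.card H : ℂ) := by
    have := Fintype.card_of_bijective hbij
    rw [← this, Fintype.card_prod]
    push_cast
    ring
  have hcardX : (Fintype.card X : ℂ) = (Fintype.card (G ⧸ H) : ℂ) := by
    have e1 : X ≃ MulAction.orbit G x := (Equiv.Set.univ X).symm.trans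
      (Equiv.setCongr (MulAction.orbit_eq_univ G x).symm)
    have e2 := (MulAction.orbitEquivQuotientStabilizer G x)
    norm_cast
    rw [Fintype.card_congr (e1.trans e2)]
  have hHne : (Fintype.card H : ℂ) ≠ 0 := by
    exact_mod_cast Fintype.card_ne_zero
  rw [hsum, Nat.card_eq_fintype_card, smul_smul, hcardG, hcardX]
  congr 1
  rw [mul_inv, mul_assoc, inv_mul_cancel₀ hHne, mul_one]

lemma UR_apply {G X : Type*} [Group G] [Fintype X] [MulAction G X] (g : G) (f : L2 X) (z : X) :
    UR G X g f z = f (g⁻¹ • z) := rfl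


/-- for any `G`-invariant state `ρ` on `B(L²(X))`, `Γ_ρ ∘ ¥ₓ` is the `G`-twirl;
in particular for `ρ = (1/n)I` and for `ρ = P_𝟙`. -/
theorem stmt9 {G X HS : Type*} [Group G] [Fintype G] [Fintype X] [DecidableEq X]
    [MulAction G X] [MulAction.IsPretransitive G X]
    [NormedAddCommGroup HS] [InnerProductSpace ℂ HS] [CompleteSpace HS]
    (US : G →* (HS →L[ℂ] HS))
    (hU : ∀ g : G, ContinuousLinearMap.adjoint (US g) = US g⁻¹)
    (x : X) (A : HS →L[ℂ] HS) (hA : InvUnder US (MulAction.stabilizer G x) A) :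
    (∀ ρ : L2 X →L[ℂ] L2 X, ρ.IsPositive → LinearMap.trace ℂ (L2 X) ↑ρ = 1 →
      (∀ g : G, UR G X g * ρ * UR G X g⁻¹ = ρ) →
      Gamma ρ (yen US x A)
        = ((Nat.card G : ℂ))⁻¹ • ∑ g : G, US g * A * US g⁻¹) ∧
    Gamma (((Fintype.card X : ℂ))⁻¹ • (1 : L2 X →L[ℂ] L2 X)) (yen US x A)
        = ((Nat.card G : ℂ))⁻¹ • ∑ g : G, US g * A * US g⁻¹ ∧
    Gamma ((innerSL ℂ (unitConst X)).smulRight (unitConst X)) (yen US x A)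
        = ((Nat.card G : ℂ))⁻¹ • ∑ g : G, US g * A * US g⁻¹ := by
  haveI : Nonempty X := ⟨x⟩
  have hcX : (Fintype.card X : ℂ) ≠ 0 := by exact_mod_cast Fintype.card_ne_zero
  refine ⟨fun ρ _ htr hinv => ?_, ?_, ?_⟩
  · apply core US x A hA
    -- diagonal entries are constant on orbits
    have hdiag : ∀ (g : G) (y : X), ρ (delta (g • y)) (g • y) = ρ (delta y) y := by
      intro g y
      have h1 : ρ (delta (g • y)) = UR G X g (ρ (delta y)) := by
        conv_lhs => rw [← hinv g]
        have : UR G X g⁻¹ (delta (g • y)) = delta y := by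
          rw [UR_delta, inv_smul_smul]
        simp only [ContinuousLinearMap.mul_apply, this]
      rw [h1, UR_apply, inv_smul_smul]
    have hconst : ∀ y : X, ρ (delta y) y = ρ (delta x) x := by
      intro y
      obtain ⟨g, hg⟩ := MulAction.exists_smul_eq G x y
      rw [← hg, hdiag]
    intro y
    rw [hconst y]
    have hsum : (Fintype.card X : ℂ) * ρ (delta x) x = 1 := by
      rw [← htr, trace_apply]
      rw [Finset.sum_congr rfl (fun z _ => hconst z), Finset.sum_const, Finset.card_univ,
        nsmul_eq_mul]
    field_simp at hsum ⊢
    linear_combination hsum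
  · apply core US x A hA
    intro y
    simp [delta, ContinuousLinearMap.smul_apply]
  · apply core US x A hA
    intro y
    have hs : (Real.sqrt (Fintype.card X) : ℂ) * (Real.sqrt (Fintype.card X) : ℂ)
        = (Fintype.card X : ℂ) := by
      rw [← Complex.ofReal_mul, Real.mul_self_sqrt (by positivity)]
      norm_cast
    have hinner : (inner ℂ (unitConst X) (delta y) : ℂ)
        = ((Real.sqrt (Fintype.card X) : ℂ))⁻¹ := by
      simp [PiLp.inner_apply, delta, EuclideanSpace.single_apply, unitConst, RCLike.inner_apply,
        Finset.sum_ite_eq', map_inv₀, Complex.conj_ofReal]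
    have h0 : ((innerSL ℂ (unitConst X)).smulRight (unitConst X)) (delta y) y
        = (inner ℂ (unitConst X) (delta y) : ℂ) * unitConst X y := rfl
    rw [h0, hinner]
    show _ * ((Real.sqrt (Fintype.card X) : ℂ))⁻¹ = _
    rw [← mul_inv, hs]

end
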